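/- An element x = [x_ε] of ρ-ℝ̃ is invertible if and only if there exist a representative (x_ε) of x and m ∈ ℕ such that |x_ε| > ρ_ε^m for all ε small. -/

import Mathlib

open Filter Topology Set Asymptotics

/-- `x` is a ρ-moderate net: `x_ε = O(ρ_ε^{-a})` as `ε → 0⁺` for some `a > 0`. -/
def RMod (ρ x : ℝ → ℝ) : Prop :=
  ∃ a : ℝ, 0 < a ∧ x =O[𝓝[>] (0:ℝ)] fun ε => ρ ε ^ (-a)

/-- `x` is a ρ-negligible net: `x_ε = O(ρ_ε^{a})` as `ε → 0⁺` for every `a > 0`. -/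
def RNegl (ρ x : ℝ → ℝ) : Prop :=
  ∀ a : ℝ, 0 < a → x =O[𝓝[>] (0:ℝ)] fun ε => ρ ε ^ a

/-- The order relation of `ρ-ℝ̃` at the level of representatives:
`x ≤ y` iff `x_ε ≤ y_ε + z_ε` for `ε` small, for some ρ-negligible net `z`. -/
def RLe (ρ x y : ℝ → ℝ) : Prop :=
  ∃ z : ℝ → ℝ, RNegl ρ z ∧ ∀ᶠ ε in 𝓝[>] (0:ℝ), x ε ≤ y ε + z ε

/-- Invertibility in `ρ-ℝ̃` at the level of representatives. -/
def RInv (ρ x : ℝ → ℝ) : Prop :=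
  ∃ y : ℝ → ℝ, RMod ρ y ∧ RNegl ρ (x * y - 1)

/-- Strict order `x < y` of `ρ-ℝ̃`: some nonnegative invertible `r` satisfies `r ≤ y - x`. -/
def RLt (ρ x y : ℝ → ℝ) : Prop :=
  ∃ r : ℝ → ℝ, RMod ρ r ∧ RInv ρ r ∧ RLe ρ 0 r ∧ RLe ρ r (y - x)

lemma ev_pos (ρ : ℝ → ℝ) (hρpos : ∀ ε ∈ Set.Ioc (0:ℝ) 1, 0 < ρ ε) :
    ∀ᶠ ε in 𝓝[>] (0:ℝ), 0 < ρ ε := by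
  have h : Set.Ioc (0:ℝ) 1 ∈ 𝓝[>] (0:ℝ) := Ioc_mem_nhdsGT_of_mem (by constructor <;> norm_num)
  filter_upwards [h] with ε hε using hρpos ε hε

/-- `x = [x_ε] ∈ ρ-ℝ̃` is invertible iff there exist a representative
`(x'_ε)` of `x` and `m ∈ ℕ` such that `|x'_ε| > ρ_ε^m` for all `ε` small. -/
theorem invertible_iff_representative_bound (ρ : ℝ → ℝ)
    (hρpos : ∀ ε ∈ Set.Ioc (0:ℝ) 1, 0 < ρ ε)
    (hρ0 : Tendsto ρ (𝓝[>] (0:ℝ)) (𝓝 0))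
    (x : ℝ → ℝ) (hx : RMod ρ x) :
    RInv ρ x ↔
      ∃ x' : ℝ → ℝ, RMod ρ x' ∧ RNegl ρ (x - x') ∧
        ∃ m : ℕ, ∀ᶠ ε in 𝓝[>] (0:ℝ), ρ ε ^ m < |x' ε| := by
  have hpos := ev_pos ρ hρpos
  constructor
  · rintro ⟨y, ⟨b, hb, hyO⟩, hneg⟩
    refine ⟨x, hx, ?_, ?_⟩
    · intro a ha
      have hxx : x - x = 0 := sub_self x
      rw [hxx]
      exact isBigO_zero _ _
    set m : ℕ := ⌈b⌉₊ + 1 with hm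
    have hbm : b < (m : ℝ) := by
      have := Nat.le_ceil b
      push_cast [hm]
      linarith
    obtain ⟨C, hC, hyC⟩ := hyO.exists_pos
    obtain ⟨D, hD, hDb⟩ := (hneg 1 one_pos).exists_pos
    have hsmallD : ∀ᶠ ε in 𝓝[>] (0:ℝ), ρ ε < 1 / (2 * D) :=
      hρ0.eventually (gt_mem_nhds (by positivity))
    have htend : Tendsto (fun ε => ρ ε ^ ((m : ℝ) - b)) (𝓝[>] (0:ℝ)) (𝓝 0) := by
      have := hρ0.rpow_const (p := (m : ℝ) - b) (Or.inr (by linarith))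
      simpa [Real.zero_rpow (by linarith : (m:ℝ) - b ≠ 0)] using this
    have hsmallC : ∀ᶠ ε in 𝓝[>] (0:ℝ), ρ ε ^ ((m:ℝ) - b) < 1 / (2 * C) :=
      htend.eventually (gt_mem_nhds (by positivity))
    refine ⟨m, ?_⟩
    filter_upwards [hpos, hyC.bound, hDb.bound, hsmallD, hsmallC] with ε h1 h2 h3 h4 h5
    simp only [Real.norm_eq_abs, Pi.mul_apply, Pi.sub_apply, Pi.one_apply] at h2 h3
    have hρb : (0:ℝ) < ρ ε ^ b := Real.rpow_pos_of_pos h1 b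
    have hρmb : (0:ℝ) < ρ ε ^ ((m:ℝ) - b) := Real.rpow_pos_of_pos h1 _
    have hnb : |ρ ε ^ (-b)| = (ρ ε ^ b)⁻¹ := by
      rw [abs_of_pos (Real.rpow_pos_of_pos h1 _), Real.rpow_neg h1.le]
    rw [hnb] at h2
    have h3' : |x ε * y ε - 1| ≤ D * ρ ε := by
      simpa [abs_of_pos h1] using h3
    have hxy : (1:ℝ)/2 ≤ |x ε * y ε| := by
      have key : 1 - |x ε * y ε| ≤ |x ε * y ε - 1| := by
        have := abs_sub_abs_le_abs_sub (1:ℝ) (x ε * y ε)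
        simpa [abs_sub_comm] using this
      have hDρ : D * ρ ε < 1/2 := by
        calc D * ρ ε < D * (1/(2*D)) := mul_lt_mul_of_pos_left h4 hD
          _ = 1/2 := by field_simp
      linarith [h3']
    have hxabs : ρ ε ^ b / (2 * C) ≤ |x ε| := by
      rw [abs_mul] at hxy
      have hy0 : 0 < |y ε| := by
        by_contra h
        push_neg at h
        have : |y ε| = 0 := le_antisymm h (abs_nonneg _)
        rw [this, mul_zero] at hxy
        linarith
      have h2' : |y ε| ≤ C / ρ ε ^ b := by rwa [div_eq_mul_inv]
      have : (1:ℝ)/2 ≤ |x ε| * (C / ρ ε ^ b) :=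
        le_trans hxy (mul_le_mul_of_nonneg_left h2' (abs_nonneg _))
      rw [← mul_div_assoc, le_div_iff₀ hρb] at this
      rw [div_le_iff₀ (by positivity : (0:ℝ) < 2 * C)]
      linarith
    have hmeq : ρ ε ^ m = ρ ε ^ b * ρ ε ^ ((m:ℝ) - b) := by
      rw [← Real.rpow_natCast (ρ ε) m, ← Real.rpow_add h1]
      ring_nf
    rw [hmeq]
    calc ρ ε ^ b * ρ ε ^ ((m:ℝ) - b) < ρ ε ^ b * (1/(2*C)) :=
          mul_lt_mul_of_pos_left h5 hρb
      _ = ρ ε ^ b / (2*C) := by ring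
      _ ≤ |x ε| := hxabs
  · rintro ⟨x', hx', hnegl, m, hm⟩
    have hlt1 : ∀ᶠ ε in 𝓝[>] (0:ℝ), ρ ε < 1 := hρ0.eventually (gt_mem_nhds one_pos)
    refine ⟨fun ε => (x' ε)⁻¹, ⟨(m:ℝ) + 1, by positivity, ?_⟩, ?_⟩
    · apply IsBigO.of_bound 1
      filter_upwards [hpos, hlt1, hm] with ε h1 h2 h3
      have hρm : (0:ℝ) < ρ ε ^ m := pow_pos h1 m
      have hx'0 : (0:ℝ) < |x' ε| := lt_trans hρm h3
      have hb1 : |(x' ε)⁻¹| ≤ (ρ ε ^ m)⁻¹ := by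
        rw [abs_inv]
        exact inv_anti₀ hρm h3.le
      have hb2 : (ρ ε ^ m)⁻¹ ≤ ρ ε ^ (-((m:ℝ) + 1)) := by
        rw [Real.rpow_neg h1.le, ← Real.rpow_natCast (ρ ε) m]
        apply inv_anti₀ (Real.rpow_pos_of_pos h1 _)
        apply Real.rpow_le_rpow_of_exponent_ge h1 h2.le
        push_cast; linarith
      have hpos' : (0:ℝ) < ρ ε ^ (-((m:ℝ) + 1)) := Real.rpow_pos_of_pos h1 _
      rw [Real.norm_eq_abs, Real.norm_eq_abs, abs_of_pos hpos', one_mul]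
      exact le_trans hb1 hb2
    · intro a ha
      obtain ⟨C, hC, hCb⟩ := (hnegl (a + (m + 1)) (by positivity)).exists_pos
      apply IsBigO.of_bound C
      filter_upwards [hpos, hlt1, hm, hCb.bound] with ε h1 h2 h3 h4
      have hρm : (0:ℝ) < ρ ε ^ m := pow_pos h1 m
      have hx'0 : x' ε ≠ 0 := by
        intro h
        rw [h, abs_zero] at h3
        exact absurd h3 (not_lt.mpr hρm.le)
      simp only [Real.norm_eq_abs, Pi.sub_apply] at h4 ⊢
      have key : x ε * (x' ε)⁻¹ - 1 = (x ε - x' ε) * (x' ε)⁻¹ := by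
        field_simp
      simp only [Pi.mul_apply, Pi.sub_apply, Pi.one_apply]
      rw [key, abs_mul, abs_inv]
      have hra : (0:ℝ) < ρ ε ^ a := Real.rpow_pos_of_pos h1 a
      have h4' : |x ε - x' ε| ≤ C * ρ ε ^ (a + ((m:ℝ) + 1)) := by
        rwa [abs_of_pos (Real.rpow_pos_of_pos h1 _)] at h4
      have hinv : |x' ε|⁻¹ ≤ (ρ ε ^ m)⁻¹ := inv_anti₀ hρm h3.le
      have step : |x ε - x' ε| * |x' ε|⁻¹ ≤ C * ρ ε ^ (a + ((m:ℝ) + 1)) * (ρ ε ^ m)⁻¹ := by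
        apply mul_le_mul h4' hinv (by positivity) (by positivity)
      have hcalc : C * ρ ε ^ (a + ((m:ℝ) + 1)) * (ρ ε ^ m)⁻¹ = C * (ρ ε ^ (a+1)) := by
        rw [← Real.rpow_natCast (ρ ε) m, ← Real.rpow_neg h1.le, mul_assoc,
          ← Real.rpow_add h1]
        ring_nf
      have hfin : C * ρ ε ^ (a + 1) ≤ C * ρ ε ^ a := by
        apply mul_le_mul_of_nonneg_left _ hC.le
        rw [Real.rpow_add h1, Real.rpow_one]
        nlinarith [hra]
      rw [abs_of_pos hra]
      calc |x ε - x' ε| * |x' ε|⁻¹ ≤ C * ρ ε ^ (a + ((m:ℝ)+1)) * (ρ ε ^ m)⁻¹ := step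
        _ = C * ρ ε ^ (a+1) := hcalc
        _ ≤ C * ρ ε ^ a := hfin
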